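/- The map val_Fc is a bijection from D = Σ(ΣΣ)* \ (Σ*11Σ* ∪ 000Σ* ∪ 101Σ*) onto ℤ; i.e., every integer (positive, negative, or zero) has a unique Fibonacci's complement representation among odd-length binary words with no factor 11, not starting with 000 or 101. -/
import Mathlib


/-- Fibonacci sequence with F 0 = 1, F 1 = 2. -/
def F (n : ℕ) : ℕ := Nat.fib (n + 2)

/-- Fibonacci extended to integer indices ≥ -2, with F_{-2} = 0, F_{-1} = 1. -/
def Fz (m : ℤ) : ℤ := ((m + 2).toNat.fib : ℤ)

/-- Fibonacci value of a word (most significant digit first):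
`valF (w_{k-1} ⋯ w_0) = ∑ w_i F_i`. -/
def valF : List ℕ → ℕ
  | [] => 0
  | a :: t => a * F t.length + valF t

/-- Fibonacci's complement value:
`valFc (w_{k-1} ⋯ w_0) = ∑ w_i F_i − w_{k-1} F_k`. -/
def valFc (w : List ℕ) : ℤ :=
  (valF w : ℤ) - (w.headD 0 : ℤ) * (F w.length : ℤ)

/-- The domain D of the Fibonacci's complement numeration system. -/
def inD (w : List ℕ) : Prop :=
  (∀ x ∈ w, x ≤ 1) ∧ Odd w.length ∧ ¬ [1, 1] <:+: w ∧
    ¬ [0, 0, 0] <+: w ∧ ¬ [1, 0, 1] <+: w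


def zeck : ℕ → ℕ → List ℕ
  | 0, _ => []
  | k+1, n => if F k ≤ n then 1 :: zeck k (n - F k) else 0 :: zeck k n

lemma F_pos (n : ℕ) : 0 < F n := Nat.fib_pos.2 (by omega)

lemma F_lt (n : ℕ) : F n < F (n + 1) := Nat.fib_lt_fib_succ (by omega)

lemma F_mono : Monotone F := monotone_nat_of_le_succ fun n => (F_lt n).le

lemma F_add (n : ℕ) : F (n + 2) = F (n + 1) + F n := by
  unfold F
  rw [show n + 2 + 2 = (n + 2) + 2 by ring, Nat.fib_add_two,
    show n + 1 + 2 = n + 2 + 1 by ring]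
  omega

lemma F_zero : F 0 = 1 := rfl

lemma F_one : F 1 = 2 := rfl

lemma F_ge (n : ℕ) : n + 1 ≤ F n := by
  induction n with
  | zero => simp [F_zero]
  | succ k ih => have := F_lt k; omega

lemma no11_tail {a : ℕ} {t : List ℕ} (h : ¬ [1,1] <:+: a :: t) : ¬ [1,1] <:+: t :=
  fun hi => h (hi.trans (List.suffix_cons a t).isInfix)

lemma valF_lt : ∀ w : List ℕ, (∀ x ∈ w, x ≤ 1) → ¬ [1,1] <:+: w → valF w < F w.length
  | [] , _, _ => by simp [valF, F_zero]
  | [a], h1, _ => by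
      have ha : a ≤ 1 := h1 a (by simp)
      have hv : valF [a] = a := by simp [valF, F_zero]
      have hf : F ([a] : List ℕ).length = 2 := rfl
      omega
  | a :: b :: s, h1, h2 => by
      have ha : a ≤ 1 := h1 a (by simp)
      have hb : b ≤ 1 := h1 b (by simp)
      rcases Nat.lt_or_ge a 1 with h | h
      · have ha0 : a = 0 := by omega
        subst ha0
        have ih := valF_lt (b :: s) (fun x hx => h1 x (List.mem_cons_of_mem _ hx))
          (no11_tail h2)
        have e1 : valF (0 :: b :: s) = valF (b :: s) := by simp [valF]
        have e2 : ((0 :: b :: s) : List ℕ).length = (b :: s).length + 1 := rfl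
        rw [e1, e2]
        exact lt_trans ih (F_lt _)
      · have ha1 : a = 1 := by omega
        subst ha1
        have hb0 : b = 0 := by
          by_contra hb1
          exact h2 (List.IsPrefix.isInfix ⟨s, by simp; omega⟩)
        subst hb0
        have ih := valF_lt s (fun x hx => h1 x (by simp [hx]))
          (no11_tail (no11_tail h2))
        have e1 : valF (1 :: 0 :: s) = F (s.length + 1) + valF s := by simp [valF]
        have e2 : F ((1 :: 0 :: s) : List ℕ).length = F (s.length + 1) + F s.length :=
          F_add s.length
        rw [e1, e2]
        exact Nat.add_lt_add_left ih _

lemma valF_inj : ∀ w w' : List ℕ, (∀ x ∈ w, x ≤ 1) → (∀ x ∈ w', x ≤ 1) →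
    ¬ [1,1] <:+: w → ¬ [1,1] <:+: w' → w.length = w'.length →
    valF w = valF w' → w = w' := by
  intro w
  induction w with
  | nil => intro w' _ _ _ _ hl _; cases w' <;> simp_all
  | cons a t ih =>
    intro w' h1 h1' h2 h2' hl hv
    cases w' with
    | nil => simp at hl
    | cons b s =>
      have ha : a ≤ 1 := h1 a (by simp)
      have hb : b ≤ 1 := h1' b (by simp)
      have hls : t.length = s.length := by simpa using hl
      have heq : a = b → t = s := by
        intro hab
        subst hab
        have hvt : valF t = valF s := by
          simp only [valF] at hv
          rw [hls] at hv
          omega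
        exact ih s (fun x hx => h1 x (List.mem_cons_of_mem _ hx))
          (fun x hx => h1' x (List.mem_cons_of_mem _ hx))
          (no11_tail h2) (no11_tail h2') hls hvt
      interval_cases a <;> interval_cases b
      · rw [heq rfl]
      · exfalso
        have := valF_lt t (fun x hx => h1 x (List.mem_cons_of_mem _ hx)) (no11_tail h2)
        simp only [valF] at hv
        rw [hls] at hv this
        omega
      · exfalso
        have := valF_lt s (fun x hx => h1' x (List.mem_cons_of_mem _ hx)) (no11_tail h2')
        simp only [valF] at hv
        rw [hls] at hv
        omega
      · rw [heq rfl]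

lemma zeck_length (k n : ℕ) : (zeck k n).length = k := by
  induction k generalizing n with
  | zero => rfl
  | succ k ih =>
    unfold zeck
    split <;> simp [ih]

lemma zeck_digits (k n : ℕ) : ∀ x ∈ zeck k n, x ≤ 1 := by
  induction k generalizing n with
  | zero => simp [zeck]
  | succ k ih =>
    unfold zeck
    split <;> intro x hx <;> rcases List.mem_cons.1 hx with h | h <;>
      first | omega | exact ih _ x h

lemma F_le_two_mul (k : ℕ) : F (k + 1) ≤ 2 * F k := by
  unfold F
  rw [show k + 1 + 2 = (k+1) + 2 by ring, Nat.fib_add_two]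
  have h1 : Nat.fib (k+1) ≤ Nat.fib (k+2) := Nat.fib_mono (by omega)
  have h2 : Nat.fib (k+1+1) = Nat.fib (k+2) := congrArg Nat.fib (by omega)
  omega

lemma zeck_valF (k n : ℕ) (h : n < F k) : valF (zeck k n) = n := by
  induction k generalizing n with
  | zero => simp [zeck, valF]; have : F 0 = 1 := rfl; omega
  | succ k ih =>
    unfold zeck
    split
    · rename_i hle
      have hsub : n - F k < F k := by
        have := F_le_two_mul k
        omega
      simp only [valF, zeck_length]
      rw [ih _ hsub]
      omega
    · rename_i hgt
      simp only [valF, zeck_length]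
      rw [ih _ (by omega)]
      omega

lemma zeck_cons1 {k n : ℕ} {r : List ℕ} (h : zeck k n = 1 :: r) : F (k - 1) ≤ n := by
  cases k with
  | zero => simp [zeck] at h
  | succ k =>
    unfold zeck at h
    split at h
    · simpa using ‹F k ≤ n›
    · simp at h

lemma zeck_no11 (k n : ℕ) (h : n < F k) : ¬ [1,1] <:+: zeck k n := by
  induction k generalizing n with
  | zero => simp [zeck]
  | succ k ih =>
    unfold zeck
    have hsub : n - F k < F (k - 1) := by
      cases k with
      | zero =>
        have h0 : F 0 = 1 := rfl
        have h1 : F (0+1) = 2 := rfl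
        have h2 : F (0-1) = 1 := rfl
        omega
      | succ m =>
        have h0 := F_add m
        have h1 : F (m+1+1) = F (m+2) := congrArg F (by omega)
        have h2 : F (m+1-1) = F m := congrArg F (by omega)
        have h3 := F_pos m
        omega
    split
    · rename_i hle
      intro hinf
      rcases List.infix_cons_iff.1 hinf with hp | hi
      · rcases List.cons_prefix_cons.1 hp with ⟨-, hp2⟩
        rcases hp2 with ⟨rest, hrest⟩
        have : F (k - 1) ≤ n - F k := zeck_cons1 hrest.symm
        omega
      · exact ih _ (lt_of_lt_of_le hsub (F_mono (by omega))) hi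
    · rename_i hgt
      intro hinf
      rcases List.infix_cons_iff.1 hinf with hp | hi
      · rcases List.cons_prefix_cons.1 hp with ⟨h01, -⟩
        omega
      · exact ih _ (by omega) hi

lemma zeck_not00 {k n : ℕ} (h1 : F k ≤ n) : ¬ [0,0] <+: zeck (k + 2) n := by
  intro hp
  unfold zeck at hp
  split at hp
  · rcases List.cons_prefix_cons.1 hp with ⟨h01, -⟩
    omega
  · rcases List.cons_prefix_cons.1 hp with ⟨-, hp2⟩
    unfold zeck at hp2
    split at hp2
    · rcases List.cons_prefix_cons.1 hp2 with ⟨h01, -⟩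
      omega
    · rename_i hgt
      exact hgt h1

lemma exists_pos_interval {n : ℕ} (h : 1 ≤ n) :
    ∃ j, Even j ∧ F j ≤ n ∧ n < F (j + 2) := by
  have key : ∀ p n, 1 ≤ n → n < F (2 * p) → ∃ j, Even j ∧ F j ≤ n ∧ n < F (j + 2) := by
    intro p
    induction p with
    | zero => intro n h1 h2; have : F 0 = 1 := rfl; simp [show 2*0 = 0 from rfl] at h2; omega
    | succ p ih =>
      intro n h1 h2
      by_cases hlt : n < F (2 * p)
      · exact ih n h1 hlt
      · exact ⟨2 * p, ⟨p, by ring⟩, by omega,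
          by rw [show 2*p+2 = 2*(p+1) by ring]; exact h2⟩
  exact key n n h (by have := F_ge (2 * n); omega)

lemma exists_neg_interval {m : ℕ} (h : 2 ≤ m) :
    ∃ j, Even j ∧ F (j + 1) < m + F j ∧ m ≤ F (j + 1) := by
  have key : ∀ p m, 2 ≤ m → m ≤ F (2 * p + 1) →
      ∃ j, Even j ∧ F (j + 1) < m + F j ∧ m ≤ F (j + 1) := by
    intro p
    induction p with
    | zero =>
      intro m h1 h2
      refine ⟨0, Even.zero, ?_, ?_⟩ <;>
        · have e0 : F 0 = 1 := rfl
          have e1 : F (0+1) = 2 := rfl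
          have e2 : F (2*0+1) = 2 := rfl
          omega
    | succ p ih =>
      intro m h1 h2
      by_cases hle : m ≤ F (2 * p + 1)
      · exact ih m h1 hle
      · rw [show 2*(p+1)+1 = 2*p+1+2 by ring] at h2
        refine ⟨2 * p + 2, ⟨p + 1, by ring⟩, ?_, ?_⟩
        · have h3 := F_add (2 * p + 1)
          have h4 : F (2*p+2+1) = F (2*p+1+2) := congrArg F (by ring)
          have h5 : F (2*p+1+1) = F (2*p+2) := congrArg F (by ring)
          omega
        · have h4 : F (2*p+2+1) = F (2*p+1+2) := congrArg F (by ring)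
          omega
  exact key m m h (by have := F_ge (2 * m + 1); omega)

lemma valFc_zero_cons (u : List ℕ) : valFc (0 :: u) = (valF u : ℤ) := by
  simp [valFc, valF]

lemma valFc_one : valFc [1] = -1 := by
  have h0 : valF [1] = 1 := by simp [valF]; rfl
  have h1 : F 1 = 2 := rfl
  unfold valFc
  rw [h0]
  norm_num [h1]

lemma valFc_neg_cons (r : List ℕ) :
    valFc (1 :: 0 :: 0 :: r) = (valF r : ℤ) - F (r.length + 1) := by
  have e1 : valF (1 :: 0 :: 0 :: r) = F (r.length + 2) + valF r := by
    show 1 * F ((0 :: 0 :: r : List ℕ).length) + (0 * F ((0 :: r : List ℕ).length)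
      + (0 * F r.length + valF r)) = F (r.length + 2) + valF r
    simp only [List.length_cons]
    have : F (r.length + 1 + 1) = F (r.length + 2) := congrArg F (by omega)
    omega
  have e2 : ((1 :: 0 :: 0 :: r : List ℕ)).length = r.length + 3 := by
    simp only [List.length_cons]
  unfold valFc
  rw [e1, e2]
  have e3 : F (r.length + 3) = F (r.length + 2) + F (r.length + 1) := by
    have := F_add (r.length + 1)
    have h4 : F (r.length + 1 + 2) = F (r.length + 3) := congrArg F (by omega)
    have h5 : F (r.length + 1 + 1) = F (r.length + 2) := congrArg F (by omega)
    omega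
  have e4 : ((1 :: 0 :: 0 :: r : List ℕ)).headD 0 = 1 := rfl
  rw [e4, e3]
  push_cast
  ring

lemma inD_struct {w : List ℕ} (h : inD w) :
    (∃ u, w = 0 :: u) ∨ w = [1] ∨ ∃ r, w = 1 :: 0 :: 0 :: r := by
  obtain ⟨hd, hodd, h11, h000, h101⟩ := h
  cases w with
  | nil => simp [Nat.odd_iff] at hodd
  | cons a t =>
    have ha : a ≤ 1 := hd a (by simp)
    interval_cases a
    · exact Or.inl ⟨t, rfl⟩
    · cases t with
      | nil => exact Or.inr (Or.inl rfl)
      | cons b s =>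
        have hb : b ≤ 1 := hd b (by simp)
        interval_cases b
        · cases s with
          | nil => simp [Nat.odd_iff] at hodd
          | cons c r =>
            have hc : c ≤ 1 := hd c (by simp)
            interval_cases c
            · exact Or.inr (Or.inr ⟨r, rfl⟩)
            · exact absurd ⟨r, rfl⟩ h101
        · exact absurd (List.IsPrefix.isInfix ⟨s, rfl⟩) h11

lemma valF_lb {u : List ℕ} (hlen : 2 ≤ u.length) (h00 : ¬ [0,0] <+: u)
    (hd : ∀ x ∈ u, x ≤ 1) : F (u.length - 2) ≤ valF u := by
  cases u with
  | nil => simp at hlen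
  | cons b s =>
    cases s with
    | nil => simp at hlen
    | cons c r =>
      have hb : b ≤ 1 := hd b (by simp)
      have hc : c ≤ 1 := hd c (by simp)
      have e : ((b :: c :: r : List ℕ)).length - 2 = r.length := by
        simp only [List.length_cons]; omega
      rw [e]
      interval_cases b
      · interval_cases c
        · exact absurd ⟨r, rfl⟩ h00
        · show F r.length ≤ 0 * F ((1 :: r : List ℕ).length) + (1 * F r.length + valF r)
          omega
      · have h1 : F r.length ≤ F ((c :: r : List ℕ).length) := by
          simp only [List.length_cons]; exact F_mono (by omega)
        show F r.length ≤ 1 * F ((c :: r : List ℕ).length) + (c * F r.length + valF r)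
        omega

lemma pos_lt_aux {u u' : List ℕ} (hll : u.length + 2 ≤ u'.length)
    (hub : valF u < F u.length) (hlb : F (u'.length - 2) ≤ valF u') :
    valF u ≠ valF u' := by
  intro he
  have := F_mono (show u.length ≤ u'.length - 2 by omega)
  omega

lemma neg_lt_aux {l l' vr vr' : ℕ} (hll : l + 2 ≤ l') (hvr' : vr' < F l') :
    (vr : ℤ) - F (l + 1) ≠ (vr' : ℤ) - F (l' + 1) := by
  intro he
  obtain ⟨q, rfl⟩ : ∃ q, l' = q + 2 := ⟨l' - 2, by omega⟩
  have h1 : F (q + 1 + 2) = F (q + 1 + 1) + F (q + 1) := F_add (q + 1)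
  have h2 : F (q + 2 + 1) = F (q + 1 + 2) := congrArg F (by omega)
  have h3 : F (q + 1 + 1) = F (q + 2) := congrArg F (by omega)
  have h4 : F (l + 1) ≤ F (q + 1) := F_mono (by omega)
  omega

lemma even_gap {a b : ℕ} (ha : Even a) (hb : Even b) (h : a < b) : a + 2 ≤ b := by
  obtain ⟨x, rfl⟩ := ha; obtain ⟨y, rfl⟩ := hb; omega

lemma inD_zero_cons {u : List ℕ} (h : inD (0 :: u)) :
    (∀ x ∈ u, x ≤ 1) ∧ Even u.length ∧ ¬ [1,1] <:+: u ∧ ¬ [0,0] <+: u := by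
  obtain ⟨hd, hodd, h11, h000, -⟩ := h
  refine ⟨fun x hx => hd x (List.mem_cons_of_mem _ hx), ?_, no11_tail h11,
    fun hp => h000 (List.cons_prefix_cons.2 ⟨rfl, hp⟩)⟩
  obtain ⟨m, hm⟩ := hodd
  simp only [List.length_cons] at hm
  exact ⟨m, by omega⟩

lemma inD_neg_cons {r : List ℕ} (h : inD (1 :: 0 :: 0 :: r)) :
    (∀ x ∈ r, x ≤ 1) ∧ Even r.length ∧ ¬ [1,1] <:+: r := by
  obtain ⟨hd, hodd, h11, -, -⟩ := h
  refine ⟨fun x hx => hd x (by simp [hx]), ?_, no11_tail (no11_tail (no11_tail h11))⟩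
  obtain ⟨m, hm⟩ := hodd
  simp only [List.length_cons] at hm
  exact ⟨m - 1, by omega⟩

lemma inD_single_zero : inD [0] := by
  refine ⟨by simp, ⟨0, rfl⟩, ?_, ?_, ?_⟩ <;> decide

lemma inD_single_one : inD [1] := by
  refine ⟨by simp, ⟨0, rfl⟩, ?_, ?_, ?_⟩ <;> decide

lemma valFc_surj (n : ℤ) : ∃ w, inD w ∧ valFc w = n := by
  rcases lt_trichotomy n 0 with hneg | rfl | hpos
  · rcases eq_or_lt_of_le (show n ≤ -1 by omega) with h1 | h2
    · exact ⟨[1], inD_single_one, by rw [valFc_one, h1]⟩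
    · set m := (-n).toNat with hm
      have hm2 : 2 ≤ m := by omega
      have hmn : (m : ℤ) = -n := Int.toNat_of_nonneg (by omega)
      obtain ⟨j, hje, hlow, hhigh⟩ := exists_neg_interval hm2
      set t := F (j + 1) - m with ht
      have htlt : t < F j := by omega
      have hz := zeck_valF j t htlt
      have hlen := zeck_length j t
      refine ⟨1 :: 0 :: 0 :: zeck j t, ⟨?_, ?_, ?_, ?_, ?_⟩, ?_⟩
      · intro x hx
        simp only [List.mem_cons] at hx
        rcases hx with rfl | rfl | rfl | hx
        · omega
        · omega
        · omega
        · exact zeck_digits j t x hx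
      · simp only [List.length_cons, hlen]
        obtain ⟨a, rfl⟩ := hje
        exact ⟨a + 1, by omega⟩
      · intro hinf
        rcases List.infix_cons_iff.1 hinf with hp | hinf
        · have hp2 := (List.cons_prefix_cons.1 hp).2
          rcases List.cons_prefix_cons.1 hp2 with ⟨h10, -⟩
          omega
        rcases List.infix_cons_iff.1 hinf with hp | hinf
        · rcases List.cons_prefix_cons.1 hp with ⟨h10, -⟩; omega
        rcases List.infix_cons_iff.1 hinf with hp | hinf
        · rcases List.cons_prefix_cons.1 hp with ⟨h10, -⟩; omega
        exact zeck_no11 j t htlt hinf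
      · intro hp
        rcases List.cons_prefix_cons.1 hp with ⟨h10, -⟩; omega
      · intro hp
        rcases List.cons_prefix_cons.1 hp with ⟨-, hp2⟩
        rcases List.cons_prefix_cons.1 hp2 with ⟨-, hp3⟩
        rcases List.cons_prefix_cons.1 hp3 with ⟨h10, -⟩; omega
      · rw [valFc_neg_cons, hlen, hz]
        omega
  · refine ⟨[0], inD_single_zero, ?_⟩
    have h0 : valF [0] = 0 := by simp [valF]
    unfold valFc
    rw [h0]
    norm_num
  · have h1 : 1 ≤ n.toNat := by omega
    obtain ⟨j, hje, hlow, hhigh⟩ := exists_pos_interval h1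
    have hz := zeck_valF (j + 2) n.toNat hhigh
    have hlen := zeck_length (j + 2) n.toNat
    refine ⟨0 :: zeck (j + 2) n.toNat, ⟨?_, ?_, ?_, ?_, ?_⟩, ?_⟩
    · intro x hx
      rcases List.mem_cons.1 hx with rfl | hx
      · omega
      · exact zeck_digits _ _ x hx
    · simp only [List.length_cons, hlen]
      obtain ⟨a, rfl⟩ := hje
      exact ⟨a + 1, by omega⟩
    · intro hinf
      rcases List.infix_cons_iff.1 hinf with hp | hinf
      · rcases List.cons_prefix_cons.1 hp with ⟨h10, -⟩; omega
      · exact zeck_no11 _ _ hhigh hinf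
    · intro hp
      rcases List.cons_prefix_cons.1 hp with ⟨-, hp2⟩
      exact zeck_not00 hlow hp2
    · intro hp
      rcases List.cons_prefix_cons.1 hp with ⟨h10, -⟩; omega
    · rw [valFc_zero_cons, hz]
      omega

lemma valFc_injOn : ∀ w, inD w → ∀ w', inD w' → valFc w = valFc w' → w = w' := by
  intro w hw w' hw' heq
  rcases inD_struct hw with ⟨u, rfl⟩ | rfl | ⟨r, rfl⟩ <;>
    rcases inD_struct hw' with ⟨u', rfl⟩ | rfl | ⟨r', rfl⟩
  · obtain ⟨hd, hev, h11, h00⟩ := inD_zero_cons hw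
    obtain ⟨hd', hev', h11', h00'⟩ := inD_zero_cons hw'
    rw [valFc_zero_cons, valFc_zero_cons] at heq
    have hv : valF u = valF u' := by exact_mod_cast heq
    rcases lt_trichotomy u.length u'.length with hl | hl | hl
    · exact absurd hv (pos_lt_aux (even_gap hev hev' hl) (valF_lt u hd h11)
        (valF_lb (by have := even_gap hev hev' hl; omega) h00' hd'))
    · rw [valF_inj u u' hd hd' h11 h11' hl hv]
    · exact absurd hv.symm (pos_lt_aux (even_gap hev' hev hl) (valF_lt u' hd' h11')
        (valF_lb (by have := even_gap hev' hev hl; omega) h00 hd))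
  · rw [valFc_zero_cons, valFc_one] at heq
    exfalso; omega
  · obtain ⟨hd', hev', h11'⟩ := inD_neg_cons hw'
    rw [valFc_zero_cons, valFc_neg_cons] at heq
    have hub := valF_lt r' hd' h11'
    have := F_lt r'.length
    exfalso; omega
  · rw [valFc_one, valFc_zero_cons] at heq
    exfalso; omega
  · rfl
  · obtain ⟨hd', hev', h11'⟩ := inD_neg_cons hw'
    rw [valFc_one, valFc_neg_cons] at heq
    have hub := valF_lt r' hd' h11'
    have := F_lt r'.length
    exfalso; omega
  · obtain ⟨hd, hev, h11⟩ := inD_neg_cons hw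
    rw [valFc_neg_cons, valFc_zero_cons] at heq
    have hub := valF_lt r hd h11
    have := F_lt r.length
    exfalso; omega
  · obtain ⟨hd, hev, h11⟩ := inD_neg_cons hw
    rw [valFc_neg_cons, valFc_one] at heq
    have hub := valF_lt r hd h11
    have := F_lt r.length
    exfalso; omega
  · obtain ⟨hd, hev, h11⟩ := inD_neg_cons hw
    obtain ⟨hd', hev', h11'⟩ := inD_neg_cons hw'
    rw [valFc_neg_cons, valFc_neg_cons] at heq
    rcases lt_trichotomy r.length r'.length with hl | hl | hl
    · exact absurd heq (neg_lt_aux (even_gap hev hev' hl) (valF_lt r' hd' h11'))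
    · have hv : valF r = valF r' := by rw [hl] at heq; omega
      rw [valF_inj r r' hd hd' h11 h11' hl hv]
    · exact absurd heq.symm (neg_lt_aux (even_gap hev' hev hl) (valF_lt r hd h11))

theorem valFc_bijection : Set.BijOn valFc {w : List ℕ | inD w} Set.univ := by
  refine ⟨fun w _ => Set.mem_univ _, fun w hw w' hw' heq => valFc_injOn w hw w' hw' heq, ?_⟩
  intro n _
  obtain ⟨w, hw, hv⟩ := valFc_surj n
  exact ⟨w, hw, hv⟩
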